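/- Let X be a Stone vector lattice over a non-empty set Ω and φ : X → ℝ ∪ {+∞} an increasing convex functional. Suppose φ(f) = sup_{μ ∈ ca⁺(X)} (⟨f,μ⟩ − φ*_X(μ)) for all f ∈ I(φ). Then φ(fⁿ) ↑ φ(f) for each f ∈ I(φ) and every sequence (fⁿ) in X with fⁿ ↑ f (pointwise increasing convergence from below). -/

import Mathlib

open MeasureTheory Filter Topology Set

/-- The σ-algebra σ(X) generated by a family X of real-valued functions on Ω. -/
def sigmaGen {Ω : Type*} (X : Set (Ω → ℝ)) : MeasurableSpace Ω :=
  ⨆ f ∈ X, MeasurableSpace.comap f inferInstance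

/-- ca⁺(X): countably additive nonnegative measures on σ(X) integrating every
nonnegative element of X finitely. -/
def caPos {Ω : Type*} (X : Set (Ω → ℝ)) : Set (@Measure Ω (sigmaGen X)) :=
  {μ | ∀ f ∈ X, (∀ ω, 0 ≤ f ω) → (∫⁻ ω, ENNReal.ofReal (f ω) ∂μ) < ⊤}

/-- The convex conjugate φ*_X on measures in ca⁺(X). -/
noncomputable def caConj {Ω : Type*} (X : Submodule ℝ (Ω → ℝ)) (φ : X → EReal)
    (μ : @Measure Ω (sigmaGen (X : Set (Ω → ℝ)))) : EReal :=
  ⨆ g : X, ((∫ ω, (g : Ω → ℝ) ω ∂μ : ℝ) : EReal) - φ g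

lemma aux_meas {Ω : Type*} (X : Submodule ℝ (Ω → ℝ)) (f : X) :
    @Measurable Ω ℝ (sigmaGen (X : Set (Ω → ℝ))) _ (f : Ω → ℝ) := by
  letI : MeasurableSpace Ω := sigmaGen (X : Set (Ω → ℝ))
  rw [measurable_iff_comap_le]
  exact le_iSup₂ (f := fun g (_ : g ∈ (X : Set (Ω → ℝ))) =>
    MeasurableSpace.comap g inferInstance) (f : Ω → ℝ) f.2

lemma aux_abs_mem {Ω : Type*} (X : Submodule ℝ (Ω → ℝ))
    (hXinf : ∀ f ∈ X, ∀ g ∈ X, f ⊓ g ∈ X) (f : X) :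
    (fun ω => |(f : Ω → ℝ) ω|) ∈ X := by
  have h : (fun ω => |(f : Ω → ℝ) ω|) = -(((-(f : Ω → ℝ)) ⊓ (f : Ω → ℝ))) := by
    funext ω
    simp only [Pi.neg_apply, Pi.inf_apply]
    rcases le_total 0 ((f : Ω → ℝ) ω) with h | h
    · rw [abs_of_nonneg h, min_eq_left (by linarith)]; ring
    · rw [abs_of_nonpos h, min_eq_right (by linarith)]
  rw [h]
  exact X.neg_mem (hXinf _ (X.neg_mem f.2) _ f.2)

lemma aux_int {Ω : Type*} (X : Submodule ℝ (Ω → ℝ))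
    (hXinf : ∀ f ∈ X, ∀ g ∈ X, f ⊓ g ∈ X) (f : X)
    (μ : @Measure Ω (sigmaGen (X : Set (Ω → ℝ))))
    (hμ : μ ∈ caPos (X : Set (Ω → ℝ))) :
    @Integrable ℝ _ _ Ω (sigmaGen (X : Set (Ω → ℝ))) (f : Ω → ℝ) μ := by
  letI : MeasurableSpace Ω := sigmaGen (X : Set (Ω → ℝ))
  refine ⟨(aux_meas X f).stronglyMeasurable.aestronglyMeasurable, ?_⟩
  have h := hμ _ (aux_abs_mem X hXinf f) (fun ω => abs_nonneg _)
  rw [HasFiniteIntegral]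
  simp only [Real.enorm_eq_ofReal_abs]
  exact h

theorem stmt3 {Ω : Type*} [Nonempty Ω] (X : Submodule ℝ (Ω → ℝ))
    (hXinf : ∀ f ∈ X, ∀ g ∈ X, f ⊓ g ∈ X)
    (hXone : ∀ f ∈ X, f ⊓ 1 ∈ X)
    (φ : X → EReal) (hbot : ∀ f, φ f ≠ ⊥)
    (hmono : ∀ f g : X, (∀ ω, (g : Ω → ℝ) ω ≤ (f : Ω → ℝ) ω) → φ g ≤ φ f)
    (hconv : ∀ f g : X, ∀ a b : ℝ, 0 ≤ a → 0 ≤ b → a + b = 1 →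
      φ (a • f + b • g) ≤ (a : EReal) * φ f + (b : EReal) * φ g)
    (hyp : ∀ f : X,
      (φ f < ⊤ ∧ ∀ g : X, ∃ ε > (0 : ℝ), ∀ lam : ℝ, 0 ≤ lam → lam ≤ ε →
        φ (f + lam • g) < ⊤) →
      φ f = ⨆ μ ∈ caPos (X : Set (Ω → ℝ)),
        ((∫ ω, (f : Ω → ℝ) ω ∂μ : ℝ) : EReal) - caConj X φ μ) :
    ∀ f : X,
      (φ f < ⊤ ∧ ∀ g : X, ∃ ε > (0 : ℝ), ∀ lam : ℝ, 0 ≤ lam → lam ≤ ε →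
        φ (f + lam • g) < ⊤) →
      ∀ fn : ℕ → X, (∀ ω, Monotone fun n => (fn n : Ω → ℝ) ω) →
        (∀ ω, Tendsto (fun n => (fn n : Ω → ℝ) ω) atTop (𝓝 ((f : Ω → ℝ) ω))) →
        (Monotone fun n => φ (fn n)) ∧ Tendsto (fun n => φ (fn n)) atTop (𝓝 (φ f)) := by
  intro f hf fn hfnmono hfnlim
  -- pointwise bound fn n ≤ f
  have hle : ∀ n ω, (fn n : Ω → ℝ) ω ≤ (f : Ω → ℝ) ω := by
    intro n ω
    exact ge_of_tendsto (hfnlim ω) (eventually_atTop.2 ⟨n, fun m hm => hfnmono ω hm⟩)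
  have hphile : ∀ n, φ (fn n) ≤ φ f := fun n => hmono f (fn n) (hle n)
  have hmonoφ : Monotone fun n => φ (fn n) :=
    fun n m h => hmono (fn m) (fn n) (fun ω => hfnmono ω h)
  refine ⟨hmonoφ, ?_⟩
  -- each φ (fn n) is a real number
  have hreal : ∀ n, φ (fn n) = ((φ (fn n)).toReal : EReal) := by
    intro n
    exact (EReal.coe_toReal (lt_of_le_of_lt (hphile n) hf.1).ne (hbot _)).symm
  set L : EReal := ⨆ n, φ (fn n) with hL
  have hLle : L ≤ φ f := iSup_le hphile
  have hkey : φ f ≤ L := by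
    rw [hyp f hf]
    refine iSup_le fun μ => iSup_le fun hμ => ?_
    by_cases hLtop : L = ⊤
    · rw [hLtop]; exact le_top
    letI : MeasurableSpace Ω := sigmaGen (X : Set (Ω → ℝ))
    have hc : ∀ n, ((∫ ω, (fn n : Ω → ℝ) ω ∂μ : ℝ) : EReal) - φ (fn n) ≤ caConj X φ μ :=
      fun n => le_iSup (fun g : X => ((∫ ω, (g : Ω → ℝ) ω ∂μ : ℝ) : EReal) - φ g) (fn n)
    -- caConj is not ⊥
    have hcbot : caConj X φ μ ≠ ⊥ := by
      intro h
      have := hc 0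
      rw [h, le_bot_iff, hreal 0, ← EReal.coe_sub] at this
      exact EReal.coe_ne_bot _ this
    by_cases hctop : caConj X φ μ = ⊤
    · rw [hctop, EReal.sub_top]
      exact bot_le
    -- now everything real
    set cr := (caConj X φ μ).toReal with hcr
    have hcre : caConj X φ μ = (cr : EReal) := (EReal.coe_toReal hctop hcbot).symm
    have hLbot : L ≠ ⊥ := by
      intro h
      have := le_iSup (fun n => φ (fn n)) 0
      rw [← hL, h, le_bot_iff] at this
      exact hbot _ this
    set Lr := L.toReal with hLr
    have hLre : L = (Lr : EReal) := (EReal.coe_toReal hLtop hLbot).symm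
    -- real inequalities
    have hIle : ∀ n, (∫ ω, (fn n : Ω → ℝ) ω ∂μ) ≤ cr + Lr := by
      intro n
      have h1 := hc n
      rw [hcre, hreal n, ← EReal.coe_sub, EReal.coe_le_coe_iff] at h1
      have h2 : φ (fn n) ≤ L := le_iSup (fun n => φ (fn n)) n
      rw [hreal n, hLre, EReal.coe_le_coe_iff] at h2
      linarith
    have htend : Tendsto (fun n => ∫ ω, (fn n : Ω → ℝ) ω ∂μ) atTop
        (𝓝 (∫ ω, (f : Ω → ℝ) ω ∂μ)) := by
      refine integral_tendsto_of_tendsto_of_monotone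
        (fun n => aux_int X hXinf (fn n) μ hμ) (aux_int X hXinf f μ hμ) ?_ ?_
      · exact ae_of_all _ hfnmono
      · exact ae_of_all _ hfnlim
    have hfin : (∫ ω, (f : Ω → ℝ) ω ∂μ) ≤ cr + Lr := le_of_tendsto' htend hIle
    rw [hcre, hLre, ← EReal.coe_sub, EReal.coe_le_coe_iff]
    linarith
  have heq : φ f = L := le_antisymm hkey hLle
  rw [heq]
  exact tendsto_atTop_iSup hmonoφ
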